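/- For dominant coweights λ̌, λ̌′ ∈ Λ̌⁺, the product of orbit sums satisfies z_{O(λ̌)} · z_{O(λ̌′)} − z_{O(λ̌+λ̌′)} ∈ F^{ℓ(λ̌+λ̌′)−1} R[Λ̌], i.e., it is a sum of basis elements e^{μ̌} with ℓ(μ̌) < ℓ(λ̌) + ℓ(λ̌′). -/

import Mathlib

namespace Stmt17

open RootPairing Finset

set_option linter.unusedSectionVars false

variable {ι X Xv : Type*} [Fintype ι] [AddCommGroup X] [AddCommGroup Xv]
variable (P : RootPairing ι ℤ X Xv)

/-- the index of `-α_i`. -/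
def nu (i : ι) : ι := P.reflectionPerm i i

lemma root_nu (i : ι) : P.root (nu P i) = - P.root i := by
  rw [nu, root_reflectionPerm, reflection_apply_self]

lemma coroot_nu (i : ι) : P.coroot (nu P i) = - P.coroot i := by
  rw [nu, coroot_reflectionPerm, coreflection_apply_self]

lemma nu_nu (i : ι) : nu P (nu P i) = i :=
  P.root.injective (by rw [root_nu, root_nu, neg_neg])

lemma p_nu (i : ι) (x : Xv) : P.root' (nu P i) x = - P.root' i x := by
  simp only [root', root_nu, map_neg, LinearMap.neg_apply]

lemma pairing_eval (i j : ι) : P.root' i (P.coroot j) = P.pairing i j :=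
  P.root'_coroot_eq_pairing i j

lemma pairing_nu_left (i j : ι) : P.pairing (nu P i) j = - P.pairing i j :=
  P.pairing_reflectionPerm_self_left i j

lemma pairing_nu_right (i j : ι) : P.pairing i (nu P j) = - P.pairing i j := by
  rw [← pairing_eval, coroot_nu, map_neg, pairing_eval]

lemma root_tau (j i : ι) :
    P.root (P.reflectionPerm j i) = P.root i - P.pairing i j • P.root j := by
  rw [← P.reflectionPerm_root j i, root_coroot_eq_pairing]

lemma p_tau (j i : ι) (x : Xv) :
    P.root' (P.reflectionPerm j i) x = P.root' i x - P.pairing i j * P.root' j x := by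
  simp only [root', root_tau, map_sub, map_smul,
    LinearMap.sub_apply, LinearMap.smul_apply, smul_eq_mul]

lemma tau_tau (j i : ι) : P.reflectionPerm j (P.reflectionPerm j i) = i :=
  P.reflectionPerm_self j i

lemma p_coreflection (j i : ι) (x : Xv) :
    P.root' i (P.coreflection j x) = P.root' (P.reflectionPerm j i) x :=
  P.flip.coroot'_reflection x

lemma coreflection_apply'' (j : ι) (x : Xv) :
    P.coreflection j x = x - P.root' j x • P.coroot j := P.coreflection_apply j x

lemma coreflection_fix {j : ι} {x : Xv} (h : P.root' j x = 0) : P.coreflection j x = x := by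
  rw [coreflection_apply'', h, zero_smul, sub_zero]

lemma coreflection_invol (j : ι) (x : Xv) : P.coreflection j (P.coreflection j x) = x :=
  (Module.involutive_reflection (P.root_coroot_two j)) x

lemma coreflection_coroot (j i : ι) :
    P.coreflection j (P.coroot i) = P.coroot (P.reflectionPerm j i) :=
  (P.coroot_reflectionPerm j i).symm

lemma coreflection_nu (j : ι) : P.coreflection (nu P j) = P.coreflection j := by
  ext x
  rw [coreflection_apply'', coreflection_apply'', p_nu, coroot_nu, neg_smul, smul_neg, neg_neg]

lemma tau_nu (j i : ι) :
    P.reflectionPerm j (nu P i) = nu P (P.reflectionPerm j i) := by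
  apply P.root.injective
  rw [root_tau, root_nu, root_nu, root_tau, pairing_nu_left]
  module

lemma pairing_tau_left (j k : ι) :
    P.pairing (P.reflectionPerm j k) j = - P.pairing k j := by
  rw [← pairing_eval, p_tau, pairing_eval, pairing_eval, pairing_same]; ring

/-! ### The canonical form on the root side, Cauchy-Schwarz, and the pair lemma -/

/-- `SX k j = B(α_k, α_j)` for the canonical form on the root side. -/
def SX (k j : ι) : ℤ := ∑ i, P.pairing k i * P.pairing j i

lemma SX_symm (k j : ι) : SX P k j = SX P j k :=
  Finset.sum_congr rfl fun i _ => mul_comm _ _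

/-- `ccX k = B(α_k, α_k)`. -/
def ccX (k : ι) : ℤ := SX P k k

lemma ccX_pos (k : ι) : 0 < ccX P k := by
  refine Finset.sum_pos' (fun i _ => mul_self_nonneg _) ⟨k, Finset.mem_univ k, ?_⟩
  rw [pairing_same]; norm_num

lemma ccX_mul_pairing (k j : ι) : ccX P k * P.pairing j k = 2 * SX P k j := by
  have h := P.rootForm_self_smul_coroot k
  have h1 : P.RootForm (P.root k) (P.root k) = ccX P k := by
    rw [rootForm_apply_apply]
    exact Finset.sum_congr rfl fun i _ => by rw [root_coroot'_eq_pairing]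
  rw [h1] at h
  have h2 := congrArg (P.root' j) h
  rw [map_smul, smul_eq_mul, pairing_eval, map_nsmul, Polarization_apply, map_sum] at h2
  rw [h2]
  simp only [map_smul, smul_eq_mul, pairing_eval, root_coroot'_eq_pairing]
  rw [nsmul_eq_mul]
  push_cast
  rw [SX, Finset.mul_sum]

lemma cs_key (k j : ι) :
    ∑ i, (ccX P k * P.pairing j i - SX P k j * P.pairing k i) *
         (ccX P k * P.pairing j i - SX P k j * P.pairing k i)
      = ccX P k * (ccX P k * ccX P j - SX P k j * SX P k j) := by
  have h : ∀ i : ι, (ccX P k * P.pairing j i - SX P k j * P.pairing k i) *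
         (ccX P k * P.pairing j i - SX P k j * P.pairing k i)
      = ccX P k * ccX P k * (P.pairing j i * P.pairing j i)
        - 2 * (ccX P k * SX P k j) * (P.pairing k i * P.pairing j i)
        + SX P k j * SX P k j * (P.pairing k i * P.pairing k i) := fun i => by ring
  rw [Finset.sum_congr rfl fun i _ => h i, Finset.sum_add_distrib, Finset.sum_sub_distrib,
    ← Finset.mul_sum, ← Finset.mul_sum, ← Finset.mul_sum]
  have e1 : ∑ i, P.pairing j i * P.pairing j i = ccX P j := rfl
  have e2 : ∑ i, P.pairing k i * P.pairing j i = SX P k j := rfl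
  have e3 : ∑ i, P.pairing k i * P.pairing k i = ccX P k := rfl
  rw [e1, e2, e3]; ring

lemma SX_sq_lt (hred : P.IsReduced) {k j : ι} (h1 : P.root k ≠ P.root j)
    (h2 : P.root k ≠ - P.root j) :
    SX P k j * SX P k j < ccX P k * ccX P j := by
  have hA := ccX_pos P k
  have hnn : 0 ≤ ∑ i, (ccX P k * P.pairing j i - SX P k j * P.pairing k i) *
         (ccX P k * P.pairing j i - SX P k j * P.pairing k i) :=
    Finset.sum_nonneg fun i _ => mul_self_nonneg _
  rw [cs_key] at hnn
  have hle : SX P k j * SX P k j ≤ ccX P k * ccX P j := by nlinarith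
  rcases hle.lt_or_eq with h | h
  · exact h
  · exfalso
    have hz : ∑ i, (ccX P k * P.pairing j i - SX P k j * P.pairing k i) *
         (ccX P k * P.pairing j i - SX P k j * P.pairing k i) = 0 := by
      rw [cs_key, h]; ring
    have hall : ∀ i : ι, ccX P k * P.pairing j i - SX P k j * P.pairing k i = 0 := by
      intro i
      have := (Finset.sum_eq_zero_iff_of_nonneg (fun i _ => mul_self_nonneg _)).mp hz i
        (Finset.mem_univ i)
      exact mul_self_eq_zero.mp this
    set u : X := ccX P k • P.root j - SX P k j • P.root k with hu_def
    have hu : u ∈ P.rootSpan ℤ :=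
      Submodule.sub_mem _ (Submodule.smul_mem _ _ (Submodule.subset_span ⟨j, rfl⟩))
        (Submodule.smul_mem _ _ (Submodule.subset_span ⟨k, rfl⟩))
    have hform : P.RootForm u u = 0 := by
      rw [rootForm_apply_apply]
      refine Finset.sum_eq_zero fun i _ => ?_
      have : P.coroot' i u = ccX P k * P.pairing j i - SX P k j * P.pairing k i := by
        simp only [hu_def, map_sub, map_smul, smul_eq_mul, root_coroot'_eq_pairing]
      rw [this, hall i, mul_zero]
    have hu0 : u = 0 := P.eq_zero_of_mem_rootSpan_of_rootForm_self_eq_zero hu hform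
    have hnli : ¬ LinearIndependent ℤ ![P.root j, P.root k] := by
      intro hli
      have := (LinearIndependent.pair_iff.mp hli (ccX P k) (- SX P k j) ?_).1
      · omega
      · rw [neg_smul, ← sub_eq_add_neg, ← hu_def, hu0]
    rcases hred.eq_or_eq_neg j k hnli with h' | h'
    · exact h1 h'.symm
    · exact h2 (by rw [h', neg_neg])

lemma pair_lemma (hred : P.IsReduced) {k j : ι} (h2 : P.root k ≠ - P.root j)
    (ha : P.pairing k j < 0) : ∃ m, P.root m = P.root k + P.root j := by
  have h1 : P.root k ≠ P.root j := by
    intro h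
    have : k = j := P.root.injective h
    rw [this, pairing_same] at ha; omega
  have e1 : ccX P k * P.pairing j k = 2 * SX P k j := ccX_mul_pairing P k j
  have e2 : ccX P j * P.pairing k j = 2 * SX P j k := ccX_mul_pairing P j k
  rw [← SX_symm] at e2
  have hAk := ccX_pos P k
  have hAj := ccX_pos P j
  have hS : SX P k j < 0 := by nlinarith
  have hb : P.pairing j k < 0 := by nlinarith
  have hcs := SX_sq_lt P hred h1 h2
  have hab : P.pairing k j * P.pairing j k < 4 := by nlinarith
  by_cases hA : P.pairing k j = -1
  · refine ⟨P.reflectionPerm j k, ?_⟩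
    rw [root_tau, hA, neg_smul, one_smul, sub_neg_eq_add]
  · have ha2 : P.pairing k j ≤ -2 := by omega
    have hb1 : P.pairing j k = -1 := by nlinarith
    refine ⟨P.reflectionPerm k j, ?_⟩
    rw [root_tau, hb1, neg_smul, one_smul, sub_neg_eq_add, add_comm]

/-! ### Words of coreflections -/

/-- The product of the coreflections along a word. -/
def wp (l : List ι) : Xv ≃ₗ[ℤ] Xv := (l.map P.coreflection).prod

/-- The permutation of `ι` tracking how roots pull back along `wp`. -/
def sig (l : List ι) : Equiv.Perm ι := (l.reverse.map P.reflectionPerm).prod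

/-- The permutation of `ι` tracking where coroots are pushed by `wp`. -/
def rr (l : List ι) : Equiv.Perm ι := (l.map P.reflectionPerm).prod

lemma mul_apply' (f g : Xv ≃ₗ[ℤ] Xv) (x : Xv) : (f * g) x = f (g x) := rfl

@[simp] lemma wp_nil : wp P ([] : List ι) = 1 := rfl

@[simp] lemma wp_cons (j : ι) (t : List ι) : wp P (j :: t) = P.coreflection j * wp P t := by
  rw [wp, List.map_cons, List.prod_cons]; rfl

lemma wp_append (l l' : List ι) : wp P (l ++ l') = wp P l * wp P l' := by
  rw [wp, List.map_append, List.prod_append]; rfl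

@[simp] lemma sig_nil : sig P ([] : List ι) = 1 := rfl

@[simp] lemma rr_nil : rr P ([] : List ι) = 1 := rfl

lemma sig_cons (j : ι) (t : List ι) :
    sig P (j :: t) = sig P t * P.reflectionPerm j := by
  rw [sig, List.reverse_cons, List.map_append, List.prod_append, List.map_singleton,
    List.prod_singleton]; rfl

lemma rr_cons (j : ι) (t : List ι) : rr P (j :: t) = P.reflectionPerm j * rr P t := by
  rw [rr, List.map_cons, List.prod_cons]; rfl

lemma p_wp (l : List ι) (i : ι) (x : Xv) :
    P.root' i (wp P l x) = P.root' (sig P l i) x := by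
  induction l generalizing i with
  | nil => rfl
  | cons j t ih =>
    rw [wp_cons, mul_apply', p_coreflection, ih, sig_cons, Equiv.Perm.mul_apply]

lemma wp_coroot (l : List ι) (i : ι) : wp P l (P.coroot i) = P.coroot (rr P l i) := by
  induction l generalizing i with
  | nil => rfl
  | cons j t ih =>
    rw [wp_cons, mul_apply', ih, coreflection_coroot, rr_cons, Equiv.Perm.mul_apply]

lemma sig_rr (l : List ι) (i : ι) : sig P l (rr P l i) = i := by
  induction l generalizing i with
  | nil => rfl
  | cons j t ih =>
    rw [sig_cons, rr_cons, Equiv.Perm.mul_apply, Equiv.Perm.mul_apply, tau_tau, ih]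

lemma rr_sig (l : List ι) (i : ι) : rr P l (sig P l i) = i := by
  induction l generalizing i with
  | nil => rfl
  | cons j t ih =>
    rw [sig_cons, rr_cons, Equiv.Perm.mul_apply, Equiv.Perm.mul_apply, ih, tau_tau]

lemma sig_nu (l : List ι) (i : ι) : sig P l (nu P i) = nu P (sig P l i) := by
  induction l generalizing i with
  | nil => rfl
  | cons j t ih =>
    rw [sig_cons, Equiv.Perm.mul_apply, Equiv.Perm.mul_apply, tau_nu, ih]

lemma rr_nu (l : List ι) (i : ι) : rr P l (nu P i) = nu P (rr P l i) := by
  induction l generalizing i with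
  | nil => rfl
  | cons j t ih =>
    rw [rr_cons, Equiv.Perm.mul_apply, Equiv.Perm.mul_apply, ih, tau_nu]

lemma wp_mem (l : List ι) : wp P l ∈ (Subgroup.closure (Set.range P.flip.reflection) : Subgroup (Xv ≃ₗ[ℤ] Xv)) := by
  induction l with
  | nil => exact Subgroup.one_mem _
  | cons j t ih =>
    rw [wp_cons]
    exact Subgroup.mul_mem _ (Subgroup.subset_closure ⟨j, rfl⟩) ih

lemma coreflection_mul_self (j : ι) : P.coreflection j * P.coreflection j = 1 := by
  apply LinearEquiv.toLinearMap_injective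
  ext x
  exact coreflection_invol P j x

lemma wp_reverse_mul (l : List ι) : wp P l.reverse * wp P l = 1 := by
  induction l with
  | nil => simp
  | cons j t ih =>
    rw [List.reverse_cons, wp_append, wp_cons, wp_cons, wp_nil, mul_one]
    calc wp P t.reverse * P.coreflection j * (P.coreflection j * wp P t)
        = wp P t.reverse * (P.coreflection j * P.coreflection j) * wp P t := by group
      _ = 1 := by rw [coreflection_mul_self, mul_one, ih]

lemma wp_reverse (l : List ι) : wp P l.reverse = (wp P l)⁻¹ :=
  eq_inv_of_mul_eq_one_left (wp_reverse_mul P l)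

lemma wp_apply_inv_apply (l : List ι) (x : Xv) : wp P l ((wp P l)⁻¹ x) = x := by
  rw [← mul_apply', mul_inv_cancel]; rfl

lemma p_wp_inv (l : List ι) (j : ι) (x : Xv) :
    P.root' (rr P l j) x = P.root' j ((wp P l)⁻¹ x) := by
  conv_lhs => rw [← wp_apply_inv_apply P l x]
  rw [p_wp, sig_rr]

lemma wp_conj (l : List ι) (j : ι) :
    wp P l * P.coreflection j * (wp P l)⁻¹ = P.coreflection (rr P l j) := by
  apply LinearEquiv.toLinearMap_injective
  ext x
  show wp P l (P.coreflection j ((wp P l)⁻¹ x)) = P.coreflection (rr P l j) x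
  rw [coreflection_apply'', coreflection_apply'', map_sub, map_smul, wp_apply_inv_apply,
    wp_coroot, ← p_wp_inv]

lemma wp_mul_coreflection (l : List ι) (j : ι) :
    wp P l * P.coreflection j = P.coreflection (rr P l j) * wp P l := by
  rw [← wp_conj]
  group

/-! ### The positive system -/

section PosSystem

variable (pos : Finset ι) (hpos : ∀ i, i ∈ pos ↔ P.reflectionPerm i i ∉ pos)

include hpos in
lemma not_mem_of_mem {i : ι} (h : i ∈ pos) : nu P i ∉ pos := (hpos i).mp h

include hpos in
lemma nu_mem_of_not_mem {i : ι} (h : i ∉ pos) : nu P i ∈ pos := by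
  by_contra h'
  exact h ((hpos i).mpr h')

include hpos in
lemma not_mem_of_nu_mem {i : ι} (h : nu P i ∈ pos) : i ∉ pos := by
  intro h'
  exact not_mem_of_mem P pos hpos h' h

include hpos in
lemma mem_of_nu_not_mem {i : ι} (h : nu P i ∉ pos) : i ∈ pos := by
  by_contra h'
  exact h (nu_mem_of_not_mem P pos hpos h')

variable (hred : P.IsReduced)
  (hadd : ∀ i ∈ pos, ∀ j ∈ pos, ∀ k, P.root k = P.root i + P.root j → k ∈ pos)

include hpos hred in
lemma root_ne_zsmul {k j : ι} (hk : k ∈ pos) (hj : j ∈ pos) (hc : P.pairing k j < 0) :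
    ∀ z : ℤ, P.root k ≠ z • P.root j := by
  intro z h
  have hnli : ¬ LinearIndependent ℤ ![P.root k, P.root j] := by
    intro hli
    have := (LinearIndependent.pair_iff.mp hli 1 (-z) (by rw [one_smul, h, neg_smul]; abel)).1
    omega
  rcases hred.eq_or_eq_neg k j hnli with h' | h'
  · have : k = j := P.root.injective h'
    rw [this, pairing_same] at hc; omega
  · have : k = nu P j := P.root.injective (by rw [h', root_nu])
    rw [this] at hk
    exact not_mem_of_mem P pos hpos hj hk

include hpos hred hadd in
lemma flip_pos {k j : ι} (hk : k ∈ pos) (hj : j ∈ pos)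
    (hout : P.reflectionPerm j k ∉ pos) : 0 < P.pairing k j := by
  by_contra hc'
  push_neg at hc'
  rcases hc'.lt_or_eq with hc | hc
  swap
  · apply hout
    have : P.reflectionPerm j k = k :=
      P.root.injective (by rw [root_tau, hc, zero_smul, sub_zero])
    rwa [this]
  -- now `c := P.pairing k j < 0`.
  set c := P.pairing k j with hc_def
  set Mn : ℕ := (-c).toNat with hMn_def
  have hMnz : (Mn : ℤ) = -c := Int.toNat_of_nonneg (by omega)
  have hMn1 : 1 ≤ Mn := by omega
  -- pairing of a root in the string
  have string_pairing : ∀ (m : ι) (t : ℤ), P.root m = P.root k + t • P.root j →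
      P.pairing m j = c + 2 * t := by
    intro m t hm
    have : P.pairing m j = P.toLinearMap (P.root m) (P.coroot j) :=
      (P.root_coroot_eq_pairing m j).symm
    rw [this, hm, map_add, map_smul, LinearMap.add_apply,
      LinearMap.smul_apply, 
      root_coroot_eq_pairing, root_coroot_eq_pairing, pairing_same, smul_eq_mul]
    ring
  -- existence of roots along the string
  set E : ℕ → Prop := fun t => ∃ m, P.root m = P.root k + (t : ℤ) • P.root j with hE_def
  have hE0 : E 0 := ⟨k, by simp⟩
  have upstep : ∀ t : ℕ, E t → c + 2 * t < 0 → E (t + 1) := by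
    intro t ⟨m, hm⟩ hlt
    have hpm : P.pairing m j < 0 := by rw [string_pairing m t hm]; exact hlt
    have hne : P.root m ≠ - P.root j := by
      intro h
      have h2 : P.root k = (-((t : ℤ) + 1)) • P.root j := by
        have h3 : P.root k = - P.root j - (t : ℤ) • P.root j := by
          rw [← h, hm]; abel
        rw [h3]; module
      exact root_ne_zsmul P pos hpos hred hk hj hc _ h2
    obtain ⟨m', hm'⟩ := pair_lemma P hred hne hpm
    refine ⟨m', ?_⟩
    rw [hm', hm]
    push_cast
    module
  have mirror : ∀ t : ℕ, t ≤ Mn → E t → E (Mn - t) := by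
    intro t ht ⟨m, hm⟩
    refine ⟨P.reflectionPerm j m, ?_⟩
    rw [root_tau, string_pairing m t hm, hm]
    have : ((Mn - t : ℕ) : ℤ) = -c - t := by
      rw [Nat.cast_sub ht, hMnz]
    rw [this]
    module
  have allE : ∀ t : ℕ, t ≤ Mn → E t := by
    have aux : ∀ t : ℕ, 2 * t ≤ Mn + 1 → E t := by
      intro t
      induction t with
      | zero => intro _; exact hE0
      | succ t ih =>
        intro h
        refine upstep t (ih (by omega)) ?_
        omega
    intro t ht
    by_cases h2 : 2 * t ≤ Mn + 1
    · exact aux t h2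
    · have h3 := mirror (Mn - t) (by omega) (aux (Mn - t) (by omega))
      have : Mn - (Mn - t) = t := by omega
      rwa [this] at h3
  -- positivity along the string
  have posStep : ∀ t : ℕ, t ≤ Mn → ∃ m ∈ pos, P.root m = P.root k + (t : ℤ) • P.root j := by
    intro t
    induction t with
    | zero => intro _; exact ⟨k, hk, by simp⟩
    | succ t ih =>
      intro ht
      obtain ⟨m, hmp, hm⟩ := ih (by omega)
      obtain ⟨m', hm'⟩ := allE (t + 1) ht
      refine ⟨m', hadd m hmp j hj m' ?_, hm'⟩
      rw [hm', hm]
      push_cast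
      module
  obtain ⟨m, hmp, hm⟩ := posStep Mn le_rfl
  apply hout
  have : m = P.reflectionPerm j k := by
    apply P.root.injective
    rw [hm, root_tau, hMnz, ← hc_def]
    module
  rwa [this] at hmp

include hpos hred hadd in
lemma root_k_ne_neg_root_j {k j : ι} (hk : k ∈ pos) (hj : j ∈ pos) :
    P.root k ≠ - P.root j := by
  intro h
  have : k = nu P j := P.root.injective (by rw [h, root_nu])
  rw [this] at hk
  exact not_mem_of_mem P pos hpos hj hk

omit [Fintype ι] in
lemma pairing_helper {m k j : ι} {a : ℤ} (h : P.root m = P.root k + a • P.root j) :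
    P.pairing m j = P.pairing k j + 2 * a := by
  have h0 : P.pairing m j = P.toLinearMap (P.root m) (P.coroot j) :=
    (P.root_coroot_eq_pairing m j).symm
  rw [h0, h, map_add, map_smul, LinearMap.add_apply,
    LinearMap.smul_apply, 
    root_coroot_eq_pairing, root_coroot_eq_pairing, pairing_same, smul_eq_mul]
  ring

/-- A simple index: a positive root which is not the sum of two positive roots. -/
def IsSimple (j : ι) : Prop :=
  j ∈ pos ∧ ∀ a ∈ pos, ∀ b ∈ pos, P.root j ≠ P.root a + P.root b

include hpos hred hadd in
lemma simple_perm {j k : ι} (hj : IsSimple P pos j) (hk : k ∈ pos) (hkj : k ≠ j) :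
    P.reflectionPerm j k ∈ pos := by
  by_contra hout
  have hjp := hj.1
  have hc : 0 < P.pairing k j := flip_pos P pos hpos hred hadd hk hjp hout
  have hm : nu P (P.reflectionPerm j k) ∈ pos := nu_mem_of_not_mem P pos hpos hout
  set m := nu P (P.reflectionPerm j k) with hm_def
  have hmroot : P.root m = P.pairing k j • P.root j - P.root k := by
    rw [hm_def, root_nu, root_tau]; module
  have hne1 : P.root k ≠ P.root j := fun h => hkj (P.root.injective h)
  have hne2 : P.root k ≠ - P.root j := root_k_ne_neg_root_j P pos hpos hred hadd hk hjp
  by_cases hc1 : P.pairing k j = 1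
  · exact hj.2 k hk m hm (by rw [hmroot, hc1]; module)
  · -- c ≥ 2
    have hc2 : 2 ≤ P.pairing k j := by omega
    have e1 : ccX P k * P.pairing j k = 2 * SX P k j := ccX_mul_pairing P k j
    have e2 : ccX P j * P.pairing k j = 2 * SX P k j := by
      rw [ccX_mul_pairing P j k, SX_symm]
    have hAk := ccX_pos P k
    have hAj := ccX_pos P j
    have hS : 0 < SX P k j := by nlinarith
    have hb0 : 0 < P.pairing j k := by nlinarith
    have hcs := SX_sq_lt P hred hne1 hne2
    have hcb : P.pairing k j * P.pairing j k < 4 := by nlinarith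
    have hb1 : P.pairing j k = 1 := by nlinarith
    have hc3 : P.pairing k j ≤ 3 := by nlinarith
    set d := P.reflectionPerm k j with hd_def
    have hdroot : P.root d = P.root j - P.root k := by
      rw [hd_def, root_tau, hb1, one_smul]
    by_cases hd : d ∈ pos
    · exact hj.2 k hk d hd (by rw [hdroot]; module)
    · have he : nu P d ∈ pos := nu_mem_of_not_mem P pos hpos hd
      set e := nu P d with he_def
      have heroot : P.root e = P.root k - P.root j := by
        rw [he_def, root_nu, hdroot]; module
      by_cases hcc : P.pairing k j = 2
      · exact hj.2 e he m hm (by rw [heroot, hmroot, hcc]; module)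
      · have hcc3 : P.pairing k j = 3 := by omega
        have hej : P.pairing e j = 1 := by
          have := pairing_helper P (m := e) (k := k) (j := j) (a := -1)
            (by rw [heroot]; module)
          omega
        set f := P.reflectionPerm j e with hf_def
        have hfroot : P.root f = P.root k - 2 • P.root j := by
          rw [hf_def, root_tau, hej, one_smul, heroot]; module
        by_cases hf : f ∈ pos
        · exact hj.2 f hf m hm (by rw [hfroot, hmroot, hcc3]; module)
        · have hg : nu P f ∈ pos := nu_mem_of_not_mem P pos hpos hf
          exact hj.2 e he (nu P f) hg (by rw [heroot, root_nu, hfroot]; module)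

/-! ### The regular dominant coweight `ξ` and the descent functional `Φ` -/

/-- The canonical form on the coweight side, diagonal values. -/
def ccN (j : ι) : ℤ := ∑ i, P.pairing i j * P.pairing i j

lemma ccN_pos (j : ι) : 0 < ccN P j := by
  refine Finset.sum_pos' (fun i _ => mul_self_nonneg _) ⟨j, Finset.mem_univ j, ?_⟩
  rw [pairing_same]; norm_num

lemma ccN_identity (j : ι) (x : Xv) :
    ccN P j * P.root' j x = 2 * ∑ i, P.pairing i j * P.root' i x := by
  have h := P.corootForm_self_smul_root j
  have h1 : P.CorootForm (P.coroot j) (P.coroot j) = ccN P j := by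
    rw [show P.CorootForm = ∑ i, (P.root' i).smulRight (P.root' i) from rfl]
    simp only [LinearMap.sum_apply, LinearMap.smulRight_apply, smul_eq_mul, pairing_eval]
    rfl
  rw [h1] at h
  calc ccN P j * P.root' j x
      = P.toLinearMap (ccN P j • P.root j) x := by
        rw [map_smul, LinearMap.smul_apply, smul_eq_mul]
    _ = P.toLinearMap (2 • P.CoPolarization (P.coroot j)) x := by rw [h]
    _ = 2 * ∑ i, P.pairing i j * P.root' i x := by
        rw [map_nsmul, LinearMap.smul_apply, nsmul_eq_mul]
        push_cast
        congr 1
        rw [CoPolarization_apply, map_sum, LinearMap.sum_apply]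
        refine Finset.sum_congr rfl fun i _ => ?_
        rw [map_smul, LinearMap.smul_apply, smul_eq_mul, pairing_eval]

/-- `Q j = Σ_{k ∈ pos} ccN k * ⟨α_k, β̌_j⟩`, a positive multiple of `⟨α_j, ξ⟩`. -/
def QQ (j : ι) : ℤ := ∑ k ∈ pos, ccN P k * P.pairing k j

include hpos hred hadd in
lemma QQ_pos {j : ι} (hj : j ∈ pos) : 0 < QQ P pos j := by
  classical
  rw [QQ, ← Finset.sum_filter_add_sum_filter_not pos (fun k => P.reflectionPerm j k ∈ pos)]
  have hzero : ∑ k ∈ pos.filter (fun k => P.reflectionPerm j k ∈ pos),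
      ccN P k * P.pairing k j = 0 := by
    refine Finset.sum_involution (fun k _ => P.reflectionPerm j k) ?_ ?_ ?_ ?_
    · intro k hk
      have hcc : ccN P (P.reflectionPerm j k) = ccN P k := by
        rw [ccN, ccN]
        calc ∑ i, P.pairing i (P.reflectionPerm j k) * P.pairing i (P.reflectionPerm j k)
            = ∑ i, P.pairing (P.reflectionPerm j i) k * P.pairing (P.reflectionPerm j i) k :=
              Finset.sum_congr rfl fun i _ => by rw [P.pairing_reflectionPerm j i k]
          _ = ∑ i, P.pairing i k * P.pairing i k :=
              Fintype.sum_equiv (P.reflectionPerm j) _ _ (fun i => rfl)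
      rw [hcc, pairing_tau_left]
      ring
    · intro k hk hfk
      intro h
      have h' : P.reflectionPerm j k = k := h
      apply hfk
      have h2 := pairing_tau_left P j k
      rw [h'] at h2
      have h3 : P.pairing k j = 0 := by omega
      rw [h3, mul_zero]
    · intro k hk
      rw [Finset.mem_filter] at hk ⊢
      exact ⟨hk.2, by rw [tau_tau]; exact hk.1⟩
    · intro k hk
      exact tau_tau P j k
  rw [hzero, zero_add]
  refine Finset.sum_pos ?_ ⟨j, ?_⟩
  · intro k hk
    rw [Finset.mem_filter] at hk
    exact mul_pos (ccN_pos P k) (flip_pos P pos hpos hred hadd hk.1 hj hk.2)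
  · rw [Finset.mem_filter]
    exact ⟨hj, not_mem_of_mem P pos hpos hj⟩

/-- `ξ`, the sum of the positive coroots: a regular dominant coweight. -/
def xi : Xv := ∑ k ∈ pos, P.coroot k

lemma p_xi (i : ι) : P.root' i (xi P pos) = ∑ k ∈ pos, P.pairing i k := by
  rw [xi, map_sum]
  exact Finset.sum_congr rfl fun k _ => pairing_eval P i k

include hpos hred hadd in
lemma xi_regular {j : ι} (hj : j ∈ pos) : 0 < P.root' j (xi P pos) := by
  have key : ccN P j * P.root' j (xi P pos) = QQ P pos j := by
    rw [ccN_identity]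
    have h1 : ∀ i : ι, P.root' i (xi P pos) = ∑ k ∈ pos, P.pairing i k := fun i => p_xi P pos i
    calc 2 * ∑ i, P.pairing i j * P.root' i (xi P pos)
        = 2 * ∑ i, ∑ k ∈ pos, P.pairing i j * P.pairing i k := by
          rw [Finset.sum_congr rfl fun i _ => by rw [h1 i, Finset.mul_sum]]
      _ = ∑ k ∈ pos, 2 * ∑ i, P.pairing i k * P.pairing i j := by
          rw [Finset.sum_comm, Finset.mul_sum]
          exact Finset.sum_congr rfl fun k _ => by
            rw [Finset.mul_sum, Finset.mul_sum]
            exact Finset.sum_congr rfl fun i _ => by ring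
      _ = ∑ k ∈ pos, ccN P k * P.pairing k j := by
          refine Finset.sum_congr rfl fun k _ => ?_
          have hid := ccN_identity P k (P.coroot j)
          rw [pairing_eval] at hid
          rw [hid]
          refine congrArg (fun z => 2 * z) (Finset.sum_congr rfl fun i _ => ?_)
          rw [pairing_eval]
      _ = QQ P pos j := rfl
  have hQ := QQ_pos P pos hpos hred hadd hj
  nlinarith [ccN_pos P j]

include hpos hred hadd in
lemma xi_neg {j : ι} (hj : j ∉ pos) : P.root' j (xi P pos) < 0 := by
  have := xi_regular P pos hpos hred hadd (nu_mem_of_not_mem P pos hpos hj)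
  rw [p_nu] at this
  omega

/-- The descent functional `Φ = 2 B(ξ, ·)`. -/
def Phi (x : Xv) : ℤ := ∑ k ∈ pos, ccN P k * P.root' k x

lemma Phi_coreflection (j : ι) (x : Xv) :
    Phi P pos (P.coreflection j x) = Phi P pos x - QQ P pos j * P.root' j x := by
  rw [Phi, Phi, QQ]
  calc ∑ k ∈ pos, ccN P k * P.root' k (P.coreflection j x)
      = ∑ k ∈ pos, (ccN P k * P.root' k x - ccN P k * P.pairing k j * P.root' j x) := by
        refine Finset.sum_congr rfl fun k _ => ?_
        rw [p_coreflection, p_tau]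
        ring
    _ = (∑ k ∈ pos, ccN P k * P.root' k x)
        - (∑ k ∈ pos, ccN P k * P.pairing k j) * P.root' j x := by
        rw [Finset.sum_sub_distrib, Finset.sum_mul]

lemma Phi_add (x y : Xv) : Phi P pos (x + y) = Phi P pos x + Phi P pos y := by
  rw [Phi, Phi, Phi, ← Finset.sum_add_distrib]
  exact Finset.sum_congr rfl fun k _ => by rw [map_add, mul_add]

/-! ### Dominance, heights and simple words -/

/-- Dominant coweights. -/
def Dom (x : Xv) : Prop := ∀ i ∈ pos, 0 ≤ P.root' i x

omit [Fintype ι] in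
lemma p_of_root_eq_add {k a b : ι} (h : P.root k = P.root a + P.root b) (x : Xv) :
    P.root' k x = P.root' a x + P.root' b x := by
  simp only [root', h, map_add, LinearMap.add_apply]

omit [Fintype ι] in
lemma p_multiset_sum (m : Multiset ι) (x : Xv) {k : ι} (h : (m.map P.root).sum = P.root k) :
    (m.map (fun s => P.root' s x)).sum = P.root' k x := by
  have : ∀ m : Multiset ι,
      P.toLinearMap ((m.map P.root).sum) x = (m.map (fun s => P.root' s x)).sum := by
    intro m
    induction m using Multiset.induction with
    | empty =>
      simp only [Multiset.map_zero, Multiset.sum_zero, map_zero,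
        LinearMap.zero_apply]
    | cons a t ih =>
      simp only [Multiset.map_cons, Multiset.sum_cons, map_add,
        LinearMap.add_apply] at ih ⊢
      rw [← ih]
  rw [← this, h]

include hpos hred hadd in
lemma simple_decomp : ∀ (n : ℕ) (k : ι), k ∈ pos → (P.root' k (xi P pos)).toNat ≤ n →
    ∃ m : Multiset ι, (∀ s ∈ m, IsSimple P pos s) ∧ (m.map P.root).sum = P.root k := by
  intro n
  induction n using Nat.strong_induction_on with
  | _ n ih =>
    intro k hk hn
    by_cases hs : IsSimple P pos k
    · exact ⟨{k}, fun s hs' => by rwa [Multiset.mem_singleton.mp hs'], by simp⟩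
    · rw [IsSimple] at hs
      push_neg at hs
      obtain ⟨a, ha, b, hb, hab⟩ := hs hk
      have hta := xi_regular P pos hpos hred hadd ha
      have htb := xi_regular P pos hpos hred hadd hb
      have htk := xi_regular P pos hpos hred hadd hk
      have hsum : P.root' k (xi P pos) = P.root' a (xi P pos) + P.root' b (xi P pos) :=
        p_of_root_eq_add P hab (xi P pos)
      have hn' : 1 ≤ n := by omega
      obtain ⟨ma, hma, hmaroot⟩ := ih (n - 1) (by omega) a ha (by omega)
      obtain ⟨mb, hmb, hmbroot⟩ := ih (n - 1) (by omega) b hb (by omega)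
      refine ⟨ma + mb, ?_, ?_⟩
      · intro s hs'
        rcases Multiset.mem_add.mp hs' with h | h
        exacts [hma s h, hmb s h]
      · rw [Multiset.map_add, Multiset.sum_add, hmaroot, hmbroot, hab]

include hpos hred hadd in
lemma exists_simple_neg {x : Xv} (hx : ¬ Dom P pos x) :
    ∃ j, IsSimple P pos j ∧ P.root' j x < 0 := by
  rw [Dom] at hx
  push_neg at hx
  obtain ⟨k, hk, hkx⟩ := hx
  obtain ⟨m, hm, hmroot⟩ := simple_decomp P pos hpos hred hadd _ k hk le_rfl
  have hsum := p_multiset_sum P m x hmroot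
  by_contra hall
  push_neg at hall
  have : (0 : ℤ) ≤ (m.map (fun s => P.root' s x)).sum := by
    refine Multiset.sum_nonneg fun z hz => ?_
    obtain ⟨s, hs, rfl⟩ := Multiset.mem_map.mp hz
    exact hall s (hm s hs)
  omega

lemma pairing_multiset_sum (m : Multiset ι) (i : ι) {k : ι}
    (h : (m.map P.root).sum = P.root k) :
    (m.map (fun s => P.pairing s i)).sum = P.pairing k i := by
  have h2 := p_multiset_sum P m (P.coroot i) h
  rw [pairing_eval] at h2
  rw [← h2]
  exact congrArg Multiset.sum (Multiset.map_congr rfl fun s _ => (pairing_eval P s i).symm)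

lemma multiset_exists_pos {m : Multiset ι} {f : ι → ℤ} (h : 0 < (m.map f).sum) :
    ∃ s ∈ m, 0 < f s := by
  induction m using Multiset.induction with
  | empty => simp at h
  | cons a t ih =>
    rw [Multiset.map_cons, Multiset.sum_cons] at h
    by_cases ha : 0 < f a
    · exact ⟨a, Multiset.mem_cons_self a t, ha⟩
    · have h2 : 0 < (t.map f).sum := by omega
      obtain ⟨s, hs, h'⟩ := ih h2
      exact ⟨s, Multiset.mem_cons_of_mem hs, h'⟩

lemma multiset_finset_swap (m : Multiset ι) (f : ι → ι → ℤ) :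
    ∑ i, (m.map (fun s => f s i)).sum = (m.map (fun s => ∑ i, f s i)).sum := by
  induction m using Multiset.induction with
  | empty => simp
  | cons a t ih => simp [Multiset.map_cons, Multiset.sum_cons, Finset.sum_add_distrib, ih]

include hpos hred hadd in
lemma exists_simple_pos_pairing {k : ι} (hk : k ∈ pos) (hns : ¬ IsSimple P pos k) :
    ∃ j, IsSimple P pos j ∧ 0 < P.pairing k j ∧ j ≠ k := by
  obtain ⟨m, hm, hmroot⟩ := simple_decomp P pos hpos hred hadd _ k hk le_rfl
  have hkey : ccX P k = (m.map (fun s => SX P k s)).sum := by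
    rw [ccX, SX]
    calc ∑ i, P.pairing k i * P.pairing k i
        = ∑ i, (m.map (fun s => P.pairing k i * P.pairing s i)).sum := by
          refine Finset.sum_congr rfl fun i _ => ?_
          calc P.pairing k i * P.pairing k i
              = P.pairing k i * (m.map (fun s => P.pairing s i)).sum := by
                rw [pairing_multiset_sum P m i hmroot]
            _ = (m.map (fun s => P.pairing k i * P.pairing s i)).sum :=
                Multiset.sum_map_mul_left.symm
        _ = (m.map (fun s => ∑ i, P.pairing k i * P.pairing s i)).sum :=
          multiset_finset_swap m _
        _ = (m.map (fun s => SX P k s)).sum := rfl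
  have hpos' : 0 < (m.map (fun s => SX P k s)).sum := hkey ▸ ccX_pos P k
  obtain ⟨s, hs, hSX⟩ := multiset_exists_pos hpos'

  have hcc := ccX_mul_pairing P s k
  rw [SX_symm] at hcc
  have hccs := ccX_pos P s
  refine ⟨s, hm s hs, by nlinarith, ?_⟩
  intro h
  exact hns (by rw [← h]; exact hm s hs)

include hpos hred hadd in
lemma reflection_word : ∀ (n : ℕ) (k : ι), k ∈ pos → (P.root' k (xi P pos)).toNat ≤ n →
    ∃ l : List ι, (∀ a ∈ l, IsSimple P pos a) ∧ wp P l = P.coreflection k := by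
  intro n
  induction n using Nat.strong_induction_on with
  | _ n ih =>
    intro k hk hn
    by_cases hs : IsSimple P pos k
    · refine ⟨[k], fun a ha => by rwa [List.mem_singleton.mp ha], ?_⟩
      rw [wp_cons, wp_nil, mul_one]
    · obtain ⟨j, hj, hpair, hjk⟩ := exists_simple_pos_pairing P pos hpos hred hadd hk hs
      have hk' : P.reflectionPerm j k ∈ pos :=
        simple_perm P pos hpos hred hadd hj hk (fun h => hjk h.symm)
      have htj := xi_regular P pos hpos hred hadd hj.1
      have htk := xi_regular P pos hpos hred hadd hk
      have htk' := xi_regular P pos hpos hred hadd hk'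
      have hdrop : P.root' (P.reflectionPerm j k) (xi P pos)
          = P.root' k (xi P pos) - P.pairing k j * P.root' j (xi P pos) := p_tau P j k _
      have hlt : P.root' (P.reflectionPerm j k) (xi P pos) < P.root' k (xi P pos) := by
        nlinarith
      obtain ⟨l', hl', hwl'⟩ := ih (n - 1) (by omega) (P.reflectionPerm j k) hk' (by omega)
      refine ⟨j :: l' ++ [j], ?_, ?_⟩
      · intro a ha
        rcases List.mem_cons.mp ha with h | h
        · rwa [h]
        rcases List.mem_append.mp h with h | h
        · exact hl' a h
        · rwa [List.mem_singleton.mp h]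
      · have hconj := wp_conj P [j] (P.reflectionPerm j k)
        have hrr : rr P [j] (P.reflectionPerm j k) = k := by
          rw [rr_cons, rr_nil, mul_one, tau_tau]
        rw [hrr] at hconj
        have hwpj : wp P [j] = P.coreflection j := by rw [wp_cons, wp_nil, mul_one]
        have hinvj : (wp P [j])⁻¹ = P.coreflection j := by
          rw [hwpj]
          exact (eq_inv_of_mul_eq_one_left (coreflection_mul_self P j)).symm
        rw [hwpj] at hconj
        have hinv2 : (P.coreflection j)⁻¹ = P.coreflection j :=
          (eq_inv_of_mul_eq_one_left (coreflection_mul_self P j)).symm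
        rw [hinv2] at hconj
        rw [show (j :: l' ++ [j] : List ι) = j :: (l' ++ [j]) from rfl, wp_cons, wp_append, hwl',
          hwpj, ← hconj]
        group

include hpos hred hadd in
lemma exists_simple_word {w : Xv ≃ₗ[ℤ] Xv} (hw : w ∈ (Subgroup.closure (Set.range P.flip.reflection) : Subgroup (Xv ≃ₗ[ℤ] Xv))) :
    ∃ l : List ι, (∀ a ∈ l, IsSimple P pos a) ∧ wp P l = w := by
  induction hw using Subgroup.closure_induction with
  | mem w hw =>
    obtain ⟨i, rfl⟩ := hw
    have hcor : P.flip.reflection i = P.coreflection i := rfl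
    by_cases hi : i ∈ pos
    · rw [hcor]
      exact reflection_word P pos hpos hred hadd _ i hi le_rfl
    · have hni : nu P i ∈ pos := nu_mem_of_not_mem P pos hpos hi
      obtain ⟨l, hl, hwl⟩ := reflection_word P pos hpos hred hadd _ (nu P i) hni le_rfl
      refine ⟨l, hl, ?_⟩
      rw [hwl, hcor]
      exact coreflection_nu P i
  | one => exact ⟨[], by simp, rfl⟩
  | mul w₁ w₂ hw₁ hw₂ ih₁ ih₂ =>
    obtain ⟨l₁, hl₁, rfl⟩ := ih₁
    obtain ⟨l₂, hl₂, rfl⟩ := ih₂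
    exact ⟨l₁ ++ l₂, fun a ha => by
      rcases List.mem_append.mp ha with h | h
      exacts [hl₁ a h, hl₂ a h], wp_append P l₁ l₂⟩
  | inv w hw ih =>
    obtain ⟨l, hl, rfl⟩ := ih
    exact ⟨l.reverse, fun a ha => hl a (List.mem_reverse.mp ha), wp_reverse P l⟩

/-! ### The exchange property and uniqueness of dominant representatives -/

include hpos hred hadd in
lemma exchange : ∀ (l : List ι), (∀ a ∈ l, IsSimple P pos a) → ∀ j : ι, j ∈ pos →
    rr P l j ∉ pos →
    ∃ m : List ι, (∀ a ∈ m, IsSimple P pos a) ∧ m.length + 1 = l.length ∧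
      wp P m = wp P l * P.coreflection j := by
  intro l
  induction l with
  | nil => intro _ j hj hout; rw [rr_nil] at hout; exact absurd hj hout
  | cons a t ih =>
    intro hsimp j hj hout
    rw [rr_cons, Equiv.Perm.mul_apply] at hout
    have hsa : IsSimple P pos a := hsimp a List.mem_cons_self
    have hst : ∀ b ∈ t, IsSimple P pos b := fun b hb => hsimp b (List.mem_cons_of_mem a hb)
    by_cases hrt : rr P t j ∈ pos
    · -- `rr t j = a` and the word collapses
      have hra : rr P t j = a := by
        by_contra hne
        exact hout (simple_perm P pos hpos hred hadd hsa hrt hne)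
      refine ⟨t, hst, rfl, ?_⟩
      have hconj := wp_conj P t j
      rw [hra] at hconj
      have : wp P t * P.coreflection j = P.coreflection a * wp P t := by
        rw [← hconj]; group
      rw [wp_cons, mul_assoc, this]
      rw [← mul_assoc, coreflection_mul_self, one_mul]
    · obtain ⟨m, hm, hlen, hwm⟩ := ih hst j hj hrt
      refine ⟨a :: m, ?_, by simp [← hlen], ?_⟩
      · intro b hb
        rcases List.mem_cons.mp hb with h | h
        · rwa [h]
        · exact hm b h
      · rw [wp_cons, hwm, wp_cons, mul_assoc]

include hpos hred hadd in
lemma dom_unique : ∀ (n : ℕ) (l : List ι), l.length ≤ n → (∀ a ∈ l, IsSimple P pos a) →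
    ∀ x : Xv, Dom P pos x → Dom P pos (wp P l x) → wp P l x = x := by
  intro n
  induction n using Nat.strong_induction_on with
  | _ n ih =>
    intro l hlen hsimp x hx hwx
    rcases List.eq_nil_or_concat l with rfl | ⟨l', j, hl_eq⟩
    · rfl
    · rw [List.concat_eq_append] at hl_eq
      subst hl_eq
      have hlen2 : l'.length + 1 ≤ n := by simpa using hlen
      have hsj : IsSimple P pos j := hsimp j (by simp)
      have hsl' : ∀ a ∈ l', IsSimple P pos a := fun a ha => hsimp a (by simp [ha])
      have hrr_eq : rr P (l' ++ [j]) j = nu P (rr P l' j) := by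
        rw [rr, List.map_append, List.prod_append, List.map_singleton, List.prod_singleton]
        show rr P l' (P.reflectionPerm j j) = _
        rw [← rr_nu]
        rfl
      by_cases hk : rr P (l' ++ [j]) j ∈ pos
      · -- exchange: the word can be shortened by 2
        have hrl' : rr P l' j ∉ pos := by
          rw [hrr_eq] at hk
          exact not_mem_of_nu_mem P pos hpos hk
        obtain ⟨m, hm, hmlen, hwm⟩ := exchange P pos hpos hred hadd l' hsl' j hsj.1 hrl'
        have hweq : wp P (l' ++ [j]) = wp P m := by
          rw [wp_append, hwm]
          rw [show wp P [j] = P.coreflection j by rw [wp_cons, wp_nil, mul_one]]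
        rw [hweq] at hwx ⊢
        exact ih (n - 1) (by omega) m (by omega) hm x hx hwx
      · -- wall case : `⟨α_j, x⟩ = 0`
        have hpj : P.root' j x = 0 := by
          have h1 : P.root' (rr P (l' ++ [j]) j) (wp P (l' ++ [j]) x) = P.root' j x := by
            rw [p_wp, sig_rr]
          have h2 : P.root' (rr P (l' ++ [j]) j) (wp P (l' ++ [j]) x) ≤ 0 := by
            have hnu : nu P (rr P (l' ++ [j]) j) ∈ pos := nu_mem_of_not_mem P pos hpos hk
            have := hwx _ hnu
            rw [p_nu] at this
            omega
          have h3 : 0 ≤ P.root' j x := hx j hsj.1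
          omega
        have hfix : P.coreflection j x = x := coreflection_fix P hpj
        have hweq : wp P (l' ++ [j]) x = wp P l' x := by
          rw [wp_append, show wp P [j] = P.coreflection j by rw [wp_cons, wp_nil, mul_one],
            mul_apply', hfix]
        rw [hweq] at hwx ⊢
        exact ih (n - 1) (by omega) l' (by omega) hsl' x hx hwx

include hpos hred hadd in
lemma stab : ∀ (n : ℕ) (l : List ι), l.length ≤ n → (∀ a ∈ l, IsSimple P pos a) →
    ∀ lam lam' : Xv, Dom P pos lam → Dom P pos lam' →
    wp P l (lam + lam') = lam + lam' → wp P l lam = lam := by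
  intro n
  induction n using Nat.strong_induction_on with
  | _ n ih =>
    intro l hlen hsimp lam lam' hlam hlam' hsum
    rcases List.eq_nil_or_concat l with rfl | ⟨l', j, hl_eq⟩
    · rfl
    · rw [List.concat_eq_append] at hl_eq
      subst hl_eq
      have hlen2 : l'.length + 1 ≤ n := by simpa using hlen
      have hsj : IsSimple P pos j := hsimp j (by simp)
      have hsl' : ∀ a ∈ l', IsSimple P pos a := fun a ha => hsimp a (by simp [ha])
      have hrr_eq : rr P (l' ++ [j]) j = nu P (rr P l' j) := by
        rw [rr, List.map_append, List.prod_append, List.map_singleton, List.prod_singleton]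
        show rr P l' (P.reflectionPerm j j) = _
        rw [← rr_nu]
        rfl
      by_cases hk : rr P (l' ++ [j]) j ∈ pos
      · have hrl' : rr P l' j ∉ pos := by
          rw [hrr_eq] at hk
          exact not_mem_of_nu_mem P pos hpos hk
        obtain ⟨m, hm, hmlen, hwm⟩ := exchange P pos hpos hred hadd l' hsl' j hsj.1 hrl'
        have hweq : wp P (l' ++ [j]) = wp P m := by
          rw [wp_append, hwm]
          rw [show wp P [j] = P.coreflection j by rw [wp_cons, wp_nil, mul_one]]
        rw [hweq] at hsum ⊢
        exact ih (n - 1) (by omega) m (by omega) hm lam lam' hlam hlam' hsum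
      · -- wall case : both `lam` and `lam'` are fixed by `s_j`
        have hpj : P.root' j (lam + lam') = 0 := by
          have h1 : P.root' (rr P (l' ++ [j]) j) (wp P (l' ++ [j]) (lam + lam'))
              = P.root' j (lam + lam') := by
            rw [p_wp, sig_rr]
          rw [hsum] at h1
          have hnu : nu P (rr P (l' ++ [j]) j) ∈ pos := nu_mem_of_not_mem P pos hpos hk
          have h2 : 0 ≤ P.root' (nu P (rr P (l' ++ [j]) j)) (lam + lam') := by
            rw [map_add]
            have := hlam _ hnu
            have := hlam' _ hnu
            rw [map_add] at *
            omega
          rw [p_nu] at h2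
          have h3 : 0 ≤ P.root' j (lam + lam') := by
            rw [map_add]
            have := hlam j hsj.1
            have := hlam' j hsj.1
            omega
          omega
        have hpjl : P.root' j lam = 0 ∧ P.root' j lam' = 0 := by
          rw [map_add] at hpj
          have := hlam j hsj.1
          have := hlam' j hsj.1
          constructor <;> omega
        have hfix : P.coreflection j lam = lam := coreflection_fix P hpjl.1
        have hfix' : P.coreflection j lam' = lam' := coreflection_fix P hpjl.2
        have hfixsum : P.coreflection j (lam + lam') = lam + lam' := by
          rw [map_add, hfix, hfix']
        have hwsing : wp P [j] = P.coreflection j := by rw [wp_cons, wp_nil, mul_one]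
        have hsum' : wp P l' (lam + lam') = lam + lam' := by
          rw [wp_append, hwsing, mul_apply', hfixsum] at hsum
          exact hsum
        have := ih (n - 1) (by omega) l' (by omega) hsl'
          lam lam' hlam hlam' hsum'
        rw [wp_append, hwsing, mul_apply', hfix, this]

/-! ### Invariance of the length function -/

variable [DecidableEq ι]

/-- The positive representative of an index. -/
def posRep (i : ι) : ι := if i ∈ pos then i else nu P i

include hpos in
lemma posRep_mem (i : ι) : posRep P pos i ∈ pos := by
  rw [posRep]
  split
  · assumption
  · exact nu_mem_of_not_mem P pos hpos (by assumption)

lemma abs_p_posRep (i : ι) (x : Xv) : |P.root' (posRep P pos i) x| = |P.root' i x| := by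
  rw [posRep]
  split
  · rfl
  · rw [p_nu, abs_neg]

include hpos in
lemma ell_inv (l : List ι) (x : Xv) :
    ∑ i ∈ pos, |P.root' i (wp P l x)| = ∑ i ∈ pos, |P.root' i x| := by
  refine Finset.sum_nbij' (fun i => posRep P pos (sig P l i)) (fun i => posRep P pos (rr P l i))
    (fun i _ => posRep_mem P pos hpos _) (fun i _ => posRep_mem P pos hpos _) ?_ ?_ ?_
  · intro i hi
    by_cases h : sig P l i ∈ pos
    · simp only [posRep]
      simp only [if_pos h, rr_sig, if_pos hi]
    · simp only [posRep]
      simp only [if_neg h, ← sig_nu, rr_sig, if_neg (not_mem_of_mem P pos hpos hi), nu_nu]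
  · intro i hi
    by_cases h : rr P l i ∈ pos
    · simp only [posRep]
      simp only [if_pos h, sig_rr, if_pos hi]
    · simp only [posRep]
      simp only [if_neg h, ← rr_nu, sig_rr, if_neg (not_mem_of_mem P pos hpos hi), nu_nu]
  · intro i _
    rw [p_wp, abs_p_posRep]

/-! ### The maximum principle for `Phi` and the master lemma -/

include hpos hred hadd in
lemma Phi_le (hfin : ∀ x : Xv, {y | ∃ w ∈ (Subgroup.closure (Set.range P.flip.reflection) : Subgroup (Xv ≃ₗ[ℤ] Xv)), w x = y}.Finite)
    {x : Xv} (hx : Dom P pos x) (l : List ι) :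
    Phi P pos (wp P l x) ≤ Phi P pos x := by
  classical
  set O := (hfin x).toFinset with hO
  have hmemO : ∀ m : List ι, wp P m x ∈ O := fun m =>
    (Set.Finite.mem_toFinset _).mpr ⟨wp P m, wp_mem P m, rfl⟩
  have hxO : x ∈ O := hmemO []
  obtain ⟨y, hyO, hymax⟩ := O.exists_max_image (Phi P pos) ⟨x, hxO⟩
  obtain ⟨w, hwW, hwx⟩ := (Set.Finite.mem_toFinset _).mp hyO
  obtain ⟨m, hmsimp, hwm⟩ := exists_simple_word P pos hpos hred hadd hwW
  have hm : wp P m x = y := by rw [hwm]; exact hwx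
  have hydom : Dom P pos y := by
    by_contra hnd
    obtain ⟨j, hj, hneg⟩ := exists_simple_neg P pos hpos hred hadd hnd
    have hstep := Phi_coreflection P pos j y
    have hQ := QQ_pos P pos hpos hred hadd hj.1
    have hmem : P.coreflection j y ∈ O := by
      rw [← hm, ← mul_apply', ← wp_cons]
      exact hmemO (j :: m)
    have := hymax _ hmem
    nlinarith
  have hyx : y = x := by
    rw [← hm]
    exact dom_unique P pos hpos hred hadd m.length m le_rfl hmsimp x hx (by rwa [hm])
  calc Phi P pos (wp P l x) ≤ Phi P pos y := hymax _ (hmemO l)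
    _ = Phi P pos x := by rw [hyx]

lemma sign_helper1 {a b : ℤ} (h : 0 ≤ a * b) (h2 : 0 ≤ a + b) : 0 ≤ a ∧ 0 ≤ b := by
  rcases mul_nonneg_iff.mp h with ⟨h3, h4⟩ | ⟨h3, h4⟩ <;> omega

lemma sign_helper2 {a b : ℤ} (h : 0 ≤ a * b) (h2 : a + b < 0) : a ≤ 0 ∧ b ≤ 0 := by
  rcases mul_nonneg_iff.mp h with ⟨h3, h4⟩ | ⟨h3, h4⟩ <;> omega

include hpos hred hadd in
lemma master (hfin : ∀ x : Xv, {y | ∃ w ∈ (Subgroup.closure (Set.range P.flip.reflection) : Subgroup (Xv ≃ₗ[ℤ] Xv)), w x = y}.Finite)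
    (lam lam' : Xv) (hlam : Dom P pos lam) (hlam' : Dom P pos lam') :
    ∀ (n : ℕ) (μ ν : Xv) (lμ lν : List ι), wp P lμ lam = μ → wp P lν lam' = ν →
    (∀ i : ι, 0 ≤ P.root' i μ * P.root' i ν) →
    (((Phi P pos lam + Phi P pos lam') - (Phi P pos μ + Phi P pos ν)).toNat ≤ n) →
    ∃ l : List ι, wp P l lam = μ ∧ wp P l lam' = ν := by
  intro n
  induction n with
  | zero =>
    intro μ ν lμ lν hμ hν hal hmeas
    by_cases hd : Dom P pos (μ + ν)
    · -- dominant case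
      have hdom : Dom P pos μ ∧ Dom P pos ν := by
        constructor <;> intro i hi <;>
          [exact (sign_helper1 (hal i) (by have := hd i hi; rwa [map_add] at this)).1;
           exact (sign_helper1 (hal i) (by have := hd i hi; rwa [map_add] at this)).2]
      obtain ⟨l₁, hl₁, hw₁⟩ := exists_simple_word P pos hpos hred hadd (wp_mem P lμ)
      obtain ⟨l₂, hl₂, hw₂⟩ := exists_simple_word P pos hpos hred hadd (wp_mem P lν)
      have e1 : μ = lam := by
        rw [← hμ, ← hw₁]
        exact dom_unique P pos hpos hred hadd l₁.length l₁ le_rfl hl₁ lam hlam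
          (by rw [hw₁, hμ]; exact hdom.1)
      have e2 : ν = lam' := by
        rw [← hν, ← hw₂]
        exact dom_unique P pos hpos hred hadd l₂.length l₂ le_rfl hl₂ lam' hlam'
          (by rw [hw₂, hν]; exact hdom.2)
      exact ⟨[], by rw [e1]; rfl, by rw [e2]; rfl⟩
    · exfalso
      obtain ⟨j, hj, hneg⟩ := exists_simple_neg P pos hpos hred hadd hd
      have hQ := QQ_pos P pos hpos hred hadd hj.1
      have hμ' := Phi_coreflection P pos j μ
      have hν' := Phi_coreflection P pos j ν
      have hsplit : P.root' j μ + P.root' j ν < 0 := by rwa [map_add] at hneg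
      have h1 : Phi P pos (P.coreflection j μ) ≤ Phi P pos lam := by
        rw [← hμ, ← mul_apply', ← wp_cons]
        exact Phi_le P pos hpos hred hadd hfin hlam (j :: lμ)
      have h2 : Phi P pos (P.coreflection j ν) ≤ Phi P pos lam' := by
        rw [← hν, ← mul_apply', ← wp_cons]
        exact Phi_le P pos hpos hred hadd hfin hlam' (j :: lν)
      nlinarith [Int.toNat_of_nonneg (show (0:ℤ) ≤ (Phi P pos lam + Phi P pos lam')
        - (Phi P pos μ + Phi P pos ν) from by nlinarith), hmeas]
  | succ n ih =>
    intro μ ν lμ lν hμ hν hal hmeas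
    by_cases hd : Dom P pos (μ + ν)
    · have hdom : Dom P pos μ ∧ Dom P pos ν := by
        constructor <;> intro i hi <;>
          [exact (sign_helper1 (hal i) (by have := hd i hi; rwa [map_add] at this)).1;
           exact (sign_helper1 (hal i) (by have := hd i hi; rwa [map_add] at this)).2]
      obtain ⟨l₁, hl₁, hw₁⟩ := exists_simple_word P pos hpos hred hadd (wp_mem P lμ)
      obtain ⟨l₂, hl₂, hw₂⟩ := exists_simple_word P pos hpos hred hadd (wp_mem P lν)
      have e1 : μ = lam := by
        rw [← hμ, ← hw₁]
        exact dom_unique P pos hpos hred hadd l₁.length l₁ le_rfl hl₁ lam hlam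
          (by rw [hw₁, hμ]; exact hdom.1)
      have e2 : ν = lam' := by
        rw [← hν, ← hw₂]
        exact dom_unique P pos hpos hred hadd l₂.length l₂ le_rfl hl₂ lam' hlam'
          (by rw [hw₂, hν]; exact hdom.2)
      exact ⟨[], by rw [e1]; rfl, by rw [e2]; rfl⟩
    · obtain ⟨j, hj, hneg⟩ := exists_simple_neg P pos hpos hred hadd hd
      have hQ := QQ_pos P pos hpos hred hadd hj.1
      have hμ' := Phi_coreflection P pos j μ
      have hν' := Phi_coreflection P pos j ν
      have hsplit : P.root' j μ + P.root' j ν < 0 := by rwa [map_add] at hneg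
      have hsign := sign_helper2 (hal j) hsplit
      have hal' : ∀ i : ι, 0 ≤ P.root' i (P.coreflection j μ) * P.root' i (P.coreflection j ν) := by
        intro i
        rw [p_coreflection, p_coreflection]
        exact hal _
      have hwμ' : wp P (j :: lμ) lam = P.coreflection j μ := by
        rw [wp_cons, mul_apply', hμ]
      have hwν' : wp P (j :: lν) lam' = P.coreflection j ν := by
        rw [wp_cons, mul_apply', hν]
      have h1 : Phi P pos (P.coreflection j μ) ≤ Phi P pos lam := by
        rw [← hwμ']
        exact Phi_le P pos hpos hred hadd hfin hlam (j :: lμ)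
      have h2 : Phi P pos (P.coreflection j ν) ≤ Phi P pos lam' := by
        rw [← hwν']
        exact Phi_le P pos hpos hred hadd hfin hlam' (j :: lν)
      have hmeas' : ((Phi P pos lam + Phi P pos lam')
          - (Phi P pos (P.coreflection j μ) + Phi P pos (P.coreflection j ν))).toNat ≤ n := by
        have hint : (Phi P pos lam + Phi P pos lam')
            - (Phi P pos (P.coreflection j μ) + Phi P pos (P.coreflection j ν))
            ≤ (Phi P pos lam + Phi P pos lam') - (Phi P pos μ + Phi P pos ν) - 1 := by
          nlinarith
        omega
      obtain ⟨l, hl1, hl2⟩ := ih (P.coreflection j μ) (P.coreflection j ν)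
        (j :: lμ) (j :: lν) hwμ' hwν' hal' hmeas'
      refine ⟨j :: l, ?_, ?_⟩
      · rw [wp_cons, mul_apply', hl1, coreflection_invol]
      · rw [wp_cons, mul_apply', hl2, coreflection_invol]

lemma abs_add_lt {a b : ℤ} (h : a * b < 0) : |a + b| < |a| + |b| := by
  rcases mul_neg_iff.mp h with ⟨ha, hb⟩ | ⟨ha, hb⟩
  · rw [abs_of_pos ha, abs_of_neg hb]
    rw [abs_lt]
    omega
  · rw [abs_of_neg ha, abs_of_pos hb]
    rw [abs_lt]
    omega

end PosSystem

end Stmt17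

open Stmt17 in
/-- For dominant coweights `λ̌, λ̌′ ∈ Λ̌⁺`, the product of orbit sums satisfies
`z_{O(λ̌)} · z_{O(λ̌′)} − z_{O(λ̌+λ̌′)} ∈ F^{ℓ(λ̌+λ̌′)−1} R[Λ̌]`, i.e. it is a sum of basis
elements `e^{μ̌}` with `ℓ(μ̌) < ℓ(λ̌) + ℓ(λ̌′)`.  Here `z_{O(λ̌)} = Σ_{μ̌ ∈ O(λ̌)} e^{μ̌}`
are the `W₀`-orbit sums in the group algebra `AddMonoidAlgebra R Xv`, `ℓ` is the length
function and `F^i` the span of the `e^{x̌}` with `ℓ(x̌) ≤ i`. -/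
theorem stmt17 {R : Type*} [CommRing R] {ι X Xv : Type*} [Fintype ι]
    [AddCommGroup X] [AddCommGroup Xv]
    (P : RootPairing ι ℤ X Xv) (hred : P.IsReduced)
    [Finite (Subgroup.closure (Set.range P.flip.reflection) : Subgroup (Xv ≃ₗ[ℤ] Xv))]
    (pos : Finset ι) (hpos : ∀ i, i ∈ pos ↔ P.reflectionPerm i i ∉ pos)
    (hadd : ∀ i ∈ pos, ∀ j ∈ pos, ∀ k, P.root k = P.root i + P.root j → k ∈ pos)
    (ℓ : Xv → ℤ) (hℓ : ∀ v, ℓ v = ∑ i ∈ pos, |P.toLinearMap (P.root i) v|)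
    (hfin : ∀ x : Xv, {y | ∃ w ∈ (Subgroup.closure (Set.range P.flip.reflection) : Subgroup (Xv ≃ₗ[ℤ] Xv)), w x = y}.Finite)
    (z : Xv → AddMonoidAlgebra R Xv)
    (hz : ∀ lam, z lam = ∑ μ ∈ (hfin lam).toFinset, AddMonoidAlgebra.single μ (1 : R))
    (lam lam' : Xv) (hlam : ∀ i ∈ pos, 0 ≤ P.toLinearMap (P.root i) lam)
    (hlam' : ∀ i ∈ pos, 0 ≤ P.toLinearMap (P.root i) lam') :
    z lam * z lam' - z (lam + lam') ∈
      Submodule.span R {f : AddMonoidAlgebra R Xv |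
        ∃ μ : Xv, ℓ μ ≤ ℓ (lam + lam') - 1 ∧ f = AddMonoidAlgebra.single μ (1 : R)} := by
  classical
  -- dominance in the internal form
  have hdomA : Dom P pos lam := fun i hi => hlam i hi
  have hdomB : Dom P pos lam' := fun i hi => hlam' i hi
  set A := (hfin lam).toFinset with hA
  set B := (hfin lam').toFinset with hB
  set C := (hfin (lam + lam')).toFinset with hC
  -- membership in the orbit finsets via words
  have memOrb : ∀ (x : Xv) (μ : Xv), μ ∈ (hfin x).toFinset ↔ ∃ l : List ι, wp P l x = μ := by
    intro x μ
    rw [Set.Finite.mem_toFinset]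
    constructor
    · rintro ⟨w, hw, rfl⟩
      obtain ⟨l, _, hwl⟩ := exists_simple_word P pos hpos hred hadd hw
      exact ⟨l, by rw [hwl]⟩
    · rintro ⟨l, rfl⟩
      exact ⟨wp P l, wp_mem P l, rfl⟩
  -- the master correspondence for aligned pairs
  have getword : ∀ μ ν : Xv, μ ∈ A → ν ∈ B → (∀ i : ι, 0 ≤ P.root' i μ * P.root' i ν) →
      ∃ l : List ι, wp P l lam = μ ∧ wp P l lam' = ν := by
    intro μ ν hμ hν hal
    obtain ⟨l1, hl1⟩ := (memOrb lam μ).mp hμ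
    obtain ⟨l2, hl2⟩ := (memOrb lam' ν).mp hν
    exact master P pos hpos hred hadd hfin lam lam' hdomA hdomB _ μ ν l1 l2 hl1 hl2 hal le_rfl
  -- expand the product
  rw [hz lam, hz lam', hz (lam + lam'), Finset.sum_mul_sum, ← hA, ← hB, ← hC]
  have hprod : (∑ μ ∈ A, ∑ ν ∈ B,
        (AddMonoidAlgebra.single μ (1:R) * AddMonoidAlgebra.single ν (1:R)))
      = ∑ q ∈ A ×ˢ B, AddMonoidAlgebra.single (q.1 + q.2) (1:R) := by
    rw [Finset.sum_product]
    exact Finset.sum_congr rfl fun μ _ => Finset.sum_congr rfl fun ν _ => by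
      rw [AddMonoidAlgebra.single_mul_single, one_mul]
  rw [hprod]
  set al : Xv × Xv → Prop := fun q => ∀ i : ι, 0 ≤ P.root' i q.1 * P.root' i q.2 with hal_def
  rw [← Finset.sum_filter_add_sum_filter_not (A ×ˢ B) al]
  -- the aligned part gives exactly the orbit sum of `lam + lam'`
  have hmain : ∑ q ∈ (A ×ˢ B).filter al, AddMonoidAlgebra.single (q.1 + q.2) (1:R)
      = ∑ η ∈ C, AddMonoidAlgebra.single η (1:R) := by
    refine Finset.sum_bij (fun q _ => q.1 + q.2) ?_ ?_ ?_ ?_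
    · -- maps into C
      intro q hq
      rw [Finset.mem_filter, Finset.mem_product] at hq
      obtain ⟨⟨hqA, hqB⟩, hqal⟩ := hq
      obtain ⟨l, hl1, hl2⟩ := getword q.1 q.2 hqA hqB hqal
      refine (memOrb (lam + lam') (q.1 + q.2)).mpr ⟨l, ?_⟩
      rw [map_add, hl1, hl2]
    · -- injective
      intro q hq q' hq' heq
      rw [Finset.mem_filter, Finset.mem_product] at hq hq'
      obtain ⟨⟨hqA, hqB⟩, hqal⟩ := hq
      obtain ⟨⟨hqA', hqB'⟩, hqal'⟩ := hq'
      obtain ⟨l, hl1, hl2⟩ := getword q.1 q.2 hqA hqB hqal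
      obtain ⟨l', hl1', hl2'⟩ := getword q'.1 q'.2 hqA' hqB' hqal'
      have heq' : q.1 + q.2 = q'.1 + q'.2 := heq
      have hsum : wp P (l'.reverse ++ l) (lam + lam') = lam + lam' := by
        rw [wp_append, wp_reverse, mul_apply', map_add, hl1, hl2, heq', ← hl1', ← hl2',
          ← map_add, ← mul_apply', inv_mul_cancel]
        rfl
      obtain ⟨m, hmsimp, hwm⟩ :=
        exists_simple_word P pos hpos hred hadd (wp_mem P (l'.reverse ++ l))
      have hstab : wp P m lam = lam :=
        stab P pos hpos hred hadd m.length m le_rfl hmsimp lam lam' hdomA hdomB (by rw [hwm]; exact hsum)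
      have hfix : wp P (l'.reverse ++ l) lam = lam := by rw [← hwm]; exact hstab
      have h1 : q.1 = q'.1 := by
        rw [← hl1, ← hl1']
        have : wp P l = wp P l' * wp P (l'.reverse ++ l) := by
          rw [wp_append, wp_reverse]
          group
        rw [this, mul_apply', hfix]
      refine Prod.ext h1 ?_
      rw [h1] at heq'
      exact add_left_cancel heq'
    · -- surjective
      intro η hη
      obtain ⟨l, hl⟩ := (memOrb (lam + lam') η).mp hη
      refine ⟨(wp P l lam, wp P l lam'), ?_, ?_⟩
      · rw [Finset.mem_filter, Finset.mem_product]
        refine ⟨⟨(memOrb lam _).mpr ⟨l, rfl⟩, (memOrb lam' _).mpr ⟨l, rfl⟩⟩, ?_⟩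
        intro i
        show (0:ℤ) ≤ P.root' i (wp P l lam) * P.root' i (wp P l lam')
        rw [p_wp, p_wp]
        by_cases hk : sig P l i ∈ pos
        · exact mul_nonneg (hdomA _ hk) (hdomB _ hk)
        · have hnk : nu P (sig P l i) ∈ pos := nu_mem_of_not_mem P pos hpos hk
          have e1 : P.root' (sig P l i) lam ≤ 0 := by
            have := hdomA _ hnk
            rw [p_nu] at this
            omega
          have e2 : P.root' (sig P l i) lam' ≤ 0 := by
            have := hdomB _ hnk
            rw [p_nu] at this
            omega
          exact mul_nonneg_iff.mpr (Or.inr ⟨e1, e2⟩)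
      · show wp P l lam + wp P l lam' = η
        rw [← map_add, hl]
    · intro q hq
      rfl
  rw [hmain, add_sub_cancel_left]
  -- the non-aligned remainder lies in the span
  refine Submodule.sum_mem _ fun q hq => ?_
  rw [Finset.mem_filter, Finset.mem_product] at hq
  obtain ⟨⟨hqA, hqB⟩, hqnal⟩ := hq
  refine Submodule.subset_span ⟨q.1 + q.2, ?_, rfl⟩
  -- find a bad positive index
  have hqnal' : ¬ ∀ i : ι, 0 ≤ P.root' i q.1 * P.root' i q.2 := hqnal
  push_neg at hqnal'
  obtain ⟨i0, hi0⟩ := hqnal'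
  have hbad : ∃ i ∈ pos, P.root' i q.1 * P.root' i q.2 < 0 := by
    by_cases h : i0 ∈ pos
    · exact ⟨i0, h, hi0⟩
    · refine ⟨nu P i0, nu_mem_of_not_mem P pos hpos h, ?_⟩
      rw [p_nu, p_nu]
      nlinarith
  obtain ⟨ib, hibpos, hibneg⟩ := hbad
  -- length computations
  obtain ⟨l1, hl1⟩ := (memOrb lam q.1).mp hqA
  obtain ⟨l2, hl2⟩ := (memOrb lam' q.2).mp hqB
  have hell1 : ∑ i ∈ pos, |P.root' i q.1| = ∑ i ∈ pos, |P.root' i lam| := by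
    rw [← hl1]; exact ell_inv P pos hpos l1 lam
  have hell2 : ∑ i ∈ pos, |P.root' i q.2| = ∑ i ∈ pos, |P.root' i lam'| := by
    rw [← hl2]; exact ell_inv P pos hpos l2 lam'
  have hℓsum : ℓ (lam + lam') = (∑ i ∈ pos, |P.root' i lam|) + ∑ i ∈ pos, |P.root' i lam'| := by
    rw [hℓ, ← Finset.sum_add_distrib]
    refine Finset.sum_congr rfl fun i hi => ?_
    show |P.root' i (lam + lam')| = _
    rw [map_add, abs_of_nonneg (add_nonneg (hdomA i hi) (hdomB i hi)),
      abs_of_nonneg (hdomA i hi), abs_of_nonneg (hdomB i hi)]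
  have hstrict : ℓ (q.1 + q.2) < (∑ i ∈ pos, |P.root' i q.1|) + ∑ i ∈ pos, |P.root' i q.2| := by
    rw [hℓ, ← Finset.sum_add_distrib]
    refine Finset.sum_lt_sum (fun i _ => ?_) ⟨ib, hibpos, ?_⟩
    · show |P.root' i (q.1 + q.2)| ≤ _
      rw [map_add]
      exact abs_add_le _ _
    · show |P.root' ib (q.1 + q.2)| < _
      rw [map_add]
      exact Stmt17.abs_add_lt hibneg
  rw [hell1, hell2, ← hℓsum] at hstrict
  omega
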